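/- Let c(φ) = Re β(φ) and b(φ) = Im β(φ), where β is the regular branch of arccos(1+(cos φ−1)e^{2πi/3}) with β(0)=0. Then c and b are strictly increasing on (0, π). -/

import Mathlib

open Real Set

private lemma ccos_re' (z : ℂ) : (Complex.cos z).re = Real.cos z.re * Real.cosh z.im := by
  rw [Complex.cos_eq]
  simp [Complex.cos_ofReal_re, Complex.sin_ofReal_re, Complex.cosh_ofReal_re,
    Complex.sinh_ofReal_re, Complex.cos_ofReal_im, Complex.sin_ofReal_im,
    Complex.cosh_ofReal_im, Complex.sinh_ofReal_im]

private lemma ccos_im' (z : ℂ) : (Complex.cos z).im = -(Real.sin z.re * Real.sinh z.im) := by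
  rw [Complex.cos_eq]
  simp [Complex.cos_ofReal_re, Complex.sin_ofReal_re, Complex.cosh_ofReal_re,
    Complex.sinh_ofReal_re, Complex.cos_ofReal_im, Complex.sin_ofReal_im,
    Complex.cosh_ofReal_im, Complex.sinh_ofReal_im]

private lemma csin_re' (z : ℂ) : (Complex.sin z).re = Real.sin z.re * Real.cosh z.im := by
  rw [Complex.sin_eq]
  simp [Complex.cos_ofReal_re, Complex.sin_ofReal_re, Complex.cosh_ofReal_re,
    Complex.sinh_ofReal_re, Complex.cos_ofReal_im, Complex.sin_ofReal_im,
    Complex.cosh_ofReal_im, Complex.sinh_ofReal_im]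

private lemma csin_im' (z : ℂ) : (Complex.sin z).im = Real.cos z.re * Real.sinh z.im := by
  rw [Complex.sin_eq]
  simp [Complex.cos_ofReal_re, Complex.sin_ofReal_re, Complex.cosh_ofReal_re,
    Complex.sinh_ofReal_re, Complex.cos_ofReal_im, Complex.sin_ofReal_im,
    Complex.cosh_ofReal_im, Complex.sinh_ofReal_im]

theorem re_im_branch_strictMono (β : ℝ → ℂ)
    (hβ0 : β 0 = 0)
    (hcont : ContinuousOn β (Icc 0 π))
    (hdiff : ∀ φ ∈ Ioo (0 : ℝ) π, DifferentiableAt ℝ β φ)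
    (hcos : ∀ φ ∈ Icc (0 : ℝ) π, Complex.cos (β φ) =
      1 + ((Real.cos φ : ℂ) - 1) * Complex.exp (2 * Real.pi * Complex.I / 3))
    (him : ∀ φ ∈ Ioo (0 : ℝ) π, 0 < (β φ).im) :
    StrictMonoOn (fun φ => (β φ).re) (Ioo 0 π) ∧
      StrictMonoOn (fun φ => (β φ).im) (Ioo 0 π) := by
  have key : ∀ φ ∈ Ioo (0:ℝ) π, 0 < (deriv β φ).re ∧ 0 < (deriv β φ).im := by
    intro φ hφ
    obtain ⟨hφ1, hφ2⟩ := hφ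
    set ω : ℂ := Complex.exp (2 * Real.pi * Complex.I / 3) with hωdef
    have hωeq : (2 * (Real.pi:ℂ) * Complex.I / 3) = ((2*π/3 : ℝ) : ℂ) * Complex.I := by
      push_cast; ring
    have hωre : ω.re = -(1/2) := by
      rw [hωdef, hωeq, Complex.exp_ofReal_mul_I_re,
        show (2*π/3 : ℝ) = π - π/3 by ring, Real.cos_pi_sub, Real.cos_pi_div_three]
    have hωim : ω.im = Real.sqrt 3 / 2 := by
      rw [hωdef, hωeq, Complex.exp_ofReal_mul_I_im,
        show (2*π/3 : ℝ) = π - π/3 by ring, Real.sin_pi_sub, Real.sin_pi_div_three]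
    have hD : HasDerivAt β (deriv β φ) φ := (hdiff φ ⟨hφ1, hφ2⟩).hasDerivAt
    set D := deriv β φ with hDdef
    have h1 : HasDerivAt (fun x => Complex.cos (β x)) (-Complex.sin (β φ) * D) φ :=
      (Complex.hasDerivAt_cos (β φ)).comp φ hD
    have h2 : HasDerivAt (fun x : ℝ => (1:ℂ) + ((Real.cos x : ℂ) - 1) * ω)
        ((-Real.sin φ : ℂ) * ω) φ := by
      have hc : HasDerivAt (fun x : ℝ => ((Real.cos x : ℂ))) ((-Real.sin φ : ℝ) : ℂ) φ :=
        (Real.hasDerivAt_cos φ).ofReal_comp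
      have := ((hc.sub_const 1).mul_const ω).const_add (1:ℂ)
      simpa using this
    have heq : (fun x => Complex.cos (β x))
        =ᶠ[nhds φ] (fun x : ℝ => (1:ℂ) + ((Real.cos x : ℂ) - 1) * ω) := by
      filter_upwards [Ioo_mem_nhds hφ1 hφ2] with x hx
      exact hcos x ⟨hx.1.le, hx.2.le⟩
    have h1' : HasDerivAt (fun x : ℝ => (1:ℂ) + ((Real.cos x : ℂ) - 1) * ω)
        (-Complex.sin (β φ) * D) φ := h1.congr_of_eventuallyEq heq.symm
    have huniq : -Complex.sin (β φ) * D = (-Real.sin φ : ℂ) * ω := h1'.unique h2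
    have hkey : Complex.sin (β φ) * D = (Real.sin φ : ℂ) * ω := by
      push_cast at huniq ⊢
      linear_combination -huniq
    -- components
    set c := (β φ).re with hcdef
    set b := (β φ).im with hbdef
    have hb : 0 < b := him φ ⟨hφ1, hφ2⟩
    set t := 1 - Real.cos φ with htdef
    have ht : 0 < t := by
      have h := Real.cos_lt_cos_of_nonneg_of_le_pi le_rfl hφ2.le hφ1
      rw [Real.cos_zero] at h
      simp only [htdef]; linarith
    have hcoseq := hcos φ ⟨hφ1.le, hφ2.le⟩
    rw [Complex.ext_iff] at hcoseq
    obtain ⟨hre, him2⟩ := hcoseq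
    rw [ccos_re' (β φ)] at hre
    rw [ccos_im' (β φ)] at him2
    simp [Complex.add_re, Complex.add_im, Complex.mul_re, Complex.mul_im, hωre, hωim,
      Complex.cos_ofReal_re] at hre him2
    rw [← hcdef, ← hbdef] at hre him2
    have hA : Real.cos c * Real.cosh b = 1 + t/2 := by
      rw [htdef]; linarith [hre]
    have hB : Real.sin c * Real.sinh b = Real.sqrt 3 * t / 2 := by
      rw [htdef]; nlinarith [him2]
    -- components of the derivative identity
    rw [Complex.ext_iff] at hkey
    obtain ⟨hk1, hk2⟩ := hkey
    simp [Complex.mul_re, Complex.mul_im, csin_re', csin_im', hωre, hωim] at hk1 hk2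
    rw [← hcdef, ← hbdef] at hk1 hk2
    have hsφ : 0 < Real.sin φ := Real.sin_pos_of_pos_of_lt_pi hφ1 hφ2
    show 0 < D.re ∧ 0 < D.im
    set dr := D.re with hdr
    set di := D.im with hdi
    clear hωre hωim hωeq hD h1 h2 heq h1' huniq hcos hcont hdiff him hβ0 hre him2
    clear hdr hdi
    clear_value dr di
    clear hDdef
    clear_value D
    clear D
    clear hωdef
    clear_value ω
    clear ω
    clear hcdef hbdef htdef
    clear_value c b t
    -- now pure real arithmetic
    have hsh : 0 < Real.sinh b := Real.sinh_pos_iff.2 hb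
    have hch : 1 ≤ Real.cosh b := Real.one_le_cosh b
    have hs3 : Real.sqrt 3 ^ 2 = 3 := Real.sq_sqrt (by norm_num)
    have hs3p : 0 < Real.sqrt 3 := Real.sqrt_pos.2 (by norm_num)
    have hsc : 0 < Real.sin c := by
      by_contra h
      push_neg at h
      nlinarith [mul_nonpos_of_nonpos_of_nonneg h hsh.le]
    have hcc : 0 < Real.cos c := by
      by_contra h
      push_neg at h
      nlinarith [mul_nonpos_of_nonpos_of_nonneg h (le_trans zero_le_one hch)]
    set X := Real.sin c * Real.cosh b with hXdef
    set Y := Real.cos c * Real.sinh b with hYdef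
    have hX : 0 < X := mul_pos hsc (lt_of_lt_of_le zero_lt_one hch)
    have hY : 0 < Y := mul_pos hcc hsh
    have ht2 : Real.sin c ^ 2 = 1 - Real.cos c ^ 2 := by
      nlinarith [Real.sin_sq_add_cos_sq c]
    have hsh2 : Real.sinh b ^ 2 = Real.cosh b ^ 2 - 1 := Real.sinh_sq b
    have hA2 : Real.cos c ^ 2 * Real.cosh b ^ 2 = (1 + t/2)^2 := by
      rw [← mul_pow, hA]
    have hB2 : Real.sin c ^ 2 * Real.sinh b ^ 2 = 3 * t^2 / 4 := by
      rw [← mul_pow, hB, div_pow, mul_pow, hs3]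
      ring
    have hch2 : Real.cosh b ^ 2 = 3*t^2/4 + 1 + (1 + t/2)^2 - Real.cos c ^ 2 := by
      have h := hB2
      rw [ht2, hsh2] at h
      linear_combination h + hA2
    have hu1 : Real.cos c ^ 2 ≤ 1 := by
      nlinarith [sq_nonneg (Real.sin c), Real.sin_sq_add_cos_sq c]
    have hXY : X^2 < 3 * Y^2 := by
      have gX : X^2 = (1 - Real.cos c ^ 2) * Real.cosh b ^ 2 := by
        rw [hXdef, mul_pow, ht2]
      have gY : Y^2 = Real.cos c ^ 2 * (Real.cosh b ^ 2 - 1) := by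
        rw [hYdef, mul_pow, hsh2]
      linarith [gX, gY, hch2, hA2, ht, hu1]
    have h3Y : X < Real.sqrt 3 * Y := by
      have he : (Real.sqrt 3 * Y)^2 = 3 * Y^2 := by
        rw [mul_pow, hs3]
      have h2 : X^2 < (Real.sqrt 3 * Y)^2 := by rw [he]; linarith
      exact lt_of_pow_lt_pow_left₀ 2 (by positivity) h2
    have hS : 0 < X^2 + Y^2 := add_pos (pow_pos hX 2) (pow_pos hY 2)
    clear_value X Y
    constructor
    · have hsum : (X^2 + Y^2) * dr = Real.sin φ * (Real.sqrt 3 * Y - X) / 2 := by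
        linear_combination X * hk1 + Y * hk2
      have hpos : 0 < Real.sin φ * (Real.sqrt 3 * Y - X) / 2 :=
        div_pos (mul_pos hsφ (sub_pos.2 h3Y)) (by norm_num)
      have hdr : dr = (Real.sin φ * (Real.sqrt 3 * Y - X) / 2) / (X^2 + Y^2) := by
        rw [eq_div_iff hS.ne']
        linear_combination hsum
      rw [hdr]
      exact div_pos hpos hS
    · have hsum : (X^2 + Y^2) * di = Real.sin φ * (Real.sqrt 3 * X + Y) / 2 := by
        linear_combination X * hk2 - Y * hk1
      have hpos : 0 < Real.sin φ * (Real.sqrt 3 * X + Y) / 2 :=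
        div_pos (mul_pos hsφ (add_pos (mul_pos hs3p hX) hY)) (by norm_num)
      have hdi : di = (Real.sin φ * (Real.sqrt 3 * X + Y) / 2) / (X^2 + Y^2) := by
        rw [eq_div_iff hS.ne']
        linear_combination hsum
      rw [hdi]
      exact div_pos hpos hS
  constructor
  · apply strictMonoOn_of_deriv_pos (convex_Ioo 0 π)
    · exact Complex.continuous_re.comp_continuousOn (hcont.mono Ioo_subset_Icc_self)
    · intro x hx
      rw [interior_Ioo] at hx
      have hD : HasDerivAt β (deriv β x) x := (hdiff x hx).hasDerivAt
      have h : HasDerivAt (fun φ => (β φ).re) ((deriv β x).re) x := by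
        exact Complex.reCLM.hasFDerivAt.comp_hasDerivAt x hD
      rw [h.deriv]
      exact (key x hx).1
  · apply strictMonoOn_of_deriv_pos (convex_Ioo 0 π)
    · exact Complex.continuous_im.comp_continuousOn (hcont.mono Ioo_subset_Icc_self)
    · intro x hx
      rw [interior_Ioo] at hx
      have hD : HasDerivAt β (deriv β x) x := (hdiff x hx).hasDerivAt
      have h : HasDerivAt (fun φ => (β φ).im) ((deriv β x).im) x := by
        exact Complex.imCLM.hasFDerivAt.comp_hasDerivAt x hD
      rw [h.deriv]
      exact (key x hx).2
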